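/- Let q, l ≥ 0 be integers with l ≥ q. Then Σ_{n=1}^∞ h_n^{(q)} / (n·C(n+l, l)) = π²/6 − H_{l−q}^{(2)}, where H_{l−q}^{(2)} = Σ_{k=1}^{l−q} 1/k² (with H_0^{(2)} = 0). -/

import Mathlib

open Finset Real

/-- The generalized harmonic number `H_n^{(p)} = ∑_{k=1}^n 1/k^p`. -/
noncomputable def gH (p : ℤ) (n : ℕ) : ℝ := ∑ k ∈ Finset.Icc 1 n, ((k : ℝ) ^ p)⁻¹

/-- The generalized hyperharmonic number `H_n^{(p,q)}`:
`H_n^{(p,0)} = 1/n^p` (with `H_0^{(p,q)} = 0`) and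
`H_n^{(p,q)} = ∑_{k=1}^n H_k^{(p,q-1)}` for `q ≥ 1`. -/
noncomputable def gHH (p : ℤ) : ℕ → ℕ → ℝ
  | 0, n => if n = 0 then 0 else ((n : ℝ) ^ p)⁻¹
  | q + 1, n => ∑ k ∈ Finset.Icc 1 n, gHH p q k

/-- Euler sum of generalized harmonic numbers `ζ_{H^{(p)}}(r) = ∑_{n≥1} H_n^{(p)}/n^r`. -/
noncomputable def eulerSum (p r : ℤ) : ℝ := ∑' n : ℕ+, gH p n / (n : ℝ) ^ r

/-- Euler sum of generalized hyperharmonic numbers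
`ζ_{H^{(p,q)}}(r) = ∑_{n≥1} H_n^{(p,q)}/n^r`. -/
noncomputable def eulerSumHH (p : ℤ) (q : ℕ) (r : ℤ) : ℝ := ∑' n : ℕ+, gHH p q n / (n : ℝ) ^ r

/-- Riemann zeta value at an integer argument, `ζ(s) = ∑_{n≥1} 1/n^s`. -/
noncomputable def zv (s : ℤ) : ℝ := ∑' n : ℕ+, ((n : ℝ) ^ s)⁻¹

/-- Unsigned Stirling numbers of the first kind, defined by
`x(x+1)⋯(x+q-1) = ∑_{k=0}^q [q,k] x^k`, i.e. `[n+1,k] = [n,k-1] + n·[n,k]`. -/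
def stirlingFirst : ℕ → ℕ → ℕ
  | 0, 0 => 1
  | 0, _ + 1 => 0
  | _ + 1, 0 => 0
  | n + 1, k + 1 => stirlingFirst n k + n * stirlingFirst n (k + 1)

/-- The series `μ(r,j) = ∑_{n≥1} 1/(n^r (n+j))`. -/
noncomputable def mu (r j : ℕ) : ℝ := ∑' n : ℕ+, 1 / ((n : ℝ) ^ r * ((n : ℝ) + j))

/-- `e_j(n+1, n+2, …, n+q)`: the `j`-th elementary symmetric polynomial
evaluated at the numbers `n+1, …, n+q`. -/
noncomputable def esymmVal (n q j : ℕ) : ℝ :=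
  ∑ s ∈ Finset.powersetCard j (Finset.Icc 1 q), ∏ i ∈ s, ((n : ℝ) + i)

section Aux
open Filter

noncomputable def tt (l n : ℕ) : ℝ := 1 / ((n : ℝ) * ((n + l).choose l : ℕ))

noncomputable def fac (n : ℕ) : ℝ := (Nat.factorial n : ℝ)

lemma fac_ne (n : ℕ) : fac n ≠ 0 := Nat.cast_ne_zero.2 (Nat.factorial_ne_zero _)

lemma fac_succ (n : ℕ) : fac (n + 1) = ((n : ℝ) + 1) * fac n := by
  unfold fac; rw [Nat.factorial_succ]; push_cast; ring

lemma tt_nonneg (l n : ℕ) : 0 ≤ tt l n := by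
  unfold tt; positivity

lemma tt_zero (l : ℕ) : tt l 0 = 0 := by simp [tt]

lemma tt_fact (l m : ℕ) : tt l (m + 1) = fac l * fac m / fac (m + 1 + l) := by
  unfold tt
  rw [Nat.cast_choose ℝ (by omega : l ≤ m + 1 + l)]
  have h2 : m + 1 + l - l = m + 1 := by omega
  rw [h2]
  show 1 / (((m : ℕ) + 1 : ℕ) * (fac (m + 1 + l) / (fac l * fac (m + 1)))) = _
  rw [fac_succ m]
  have f1 := fac_ne (m + 1 + l)
  have f2 := fac_ne l
  have f3 := fac_ne m
  have f4 : ((m : ℝ) + 1) ≠ 0 := by positivity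
  push_cast
  field_simp

lemma tt_succ (l m : ℕ) : tt (l + 1) (m + 1) = tt l (m + 1) - tt l (m + 2) := by
  have e2 : tt l (m + 2) = fac l * fac (m + 1) / fac (m + 2 + l) := tt_fact l (m + 1)
  rw [tt_fact (l + 1) m, e2, tt_fact l m]
  have h1 : m + 1 + (l + 1) = (m + 1 + l) + 1 := by omega
  have h2 : m + 2 + l = (m + 1 + l) + 1 := by omega
  rw [h1, h2, fac_succ (m + 1 + l), fac_succ m, fac_succ l]
  have f1 := fac_ne (m + 1 + l)
  have f2 := fac_ne l
  have f3 := fac_ne m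
  have f5 : ((m : ℝ) + 1 + l + 1) ≠ 0 := by positivity
  push_cast
  field_simp
  ring

lemma tt_shift (l m : ℕ) : ((l : ℝ) + 1) * tt l (m + 2) = ((m : ℝ) + 1) * tt (l + 1) (m + 1) := by
  rw [tt_fact l (m + 1), tt_fact (l + 1) m]
  have h1 : m + 1 + 1 + l = (m + 1 + l) + 1 := by omega
  have h2 : m + 1 + (l + 1) = (m + 1 + l) + 1 := by omega
  rw [h1, h2, fac_succ (m + 1 + l), fac_succ m, fac_succ l]
  push_cast
  ring

lemma tt_le (l n : ℕ) : tt l n ≤ (n : ℝ)⁻¹ := by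
  rcases n with _ | m
  · simp [tt]
  · unfold tt
    rw [one_div]
    have hc : (1 : ℝ) ≤ (((m + 1 + l).choose l : ℕ) : ℝ) := by
      exact_mod_cast Nat.one_le_iff_ne_zero.2 (Nat.choose_pos (by omega : l ≤ m + 1 + l)).ne'
    have hp : (0 : ℝ) < ((m : ℕ) + 1 : ℕ) := by positivity
    apply inv_anti₀ hp
    exact le_mul_of_one_le_right hp.le hc

lemma tt_tendsto (l : ℕ) : Tendsto (fun n => tt l n) atTop (nhds 0) := by
  apply squeeze_zero (fun n => tt_nonneg l n) (tt_le l)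
  exact tendsto_inv_atTop_nhds_zero_nat

lemma hasSum_tt_shifted (l k : ℕ) :
    HasSum (fun j : ℕ => tt (l + 1) (j + (k + 1))) (tt l (k + 1)) := by
  have hnn : ∀ j : ℕ, 0 ≤ tt (l + 1) (j + (k + 1)) := fun j => tt_nonneg _ _
  rw [hasSum_iff_tendsto_nat_of_nonneg hnn]
  have hterm : ∀ j : ℕ, tt (l + 1) (j + (k + 1)) = tt l (j + (k + 1)) - tt l (j + 1 + (k + 1)) := by
    intro j
    have h1 : j + (k + 1) = (j + k) + 1 := by omega
    have h2 : j + 1 + (k + 1) = (j + k) + 2 := by omega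
    rw [h1, h2]
    exact tt_succ l (j + k)
  have hsum : ∀ N : ℕ, ∑ j ∈ Finset.range N, tt (l + 1) (j + (k + 1))
      = tt l (k + 1) - tt l (N + (k + 1)) := by
    intro N
    calc ∑ j ∈ Finset.range N, tt (l + 1) (j + (k + 1))
        = ∑ j ∈ Finset.range N, (tt l (j + (k + 1)) - tt l ((j + 1) + (k + 1))) :=
          Finset.sum_congr rfl fun j _ => hterm j
      _ = tt l (0 + (k + 1)) - tt l (N + (k + 1)) :=
          Finset.sum_range_sub' (fun j => tt l (j + (k + 1))) N
      _ = tt l (k + 1) - tt l (N + (k + 1)) := by rw [zero_add]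
  simp_rw [hsum]
  have h2 : Tendsto (fun N : ℕ => tt l (N + (k + 1))) atTop (nhds 0) :=
    (tt_tendsto l).comp (tendsto_add_atTop_nat (k + 1))
  simpa using tendsto_const_nhds.sub h2

lemma hasSum_tt_tail (l k : ℕ) :
    HasSum (fun n : ℕ => if k + 1 ≤ n then tt (l + 1) n else 0) (tt l (k + 1)) := by
  have hi : Function.Injective (fun j : ℕ => j + (k + 1)) := add_left_injective (k + 1)
  have h0 : ∀ x ∉ Set.range (fun j : ℕ => j + (k + 1)),
      (if k + 1 ≤ x then tt (l + 1) x else 0) = 0 := by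
    intro x hx
    refine if_neg fun h => hx ⟨x - (k + 1), ?_⟩
    show x - (k + 1) + (k + 1) = x
    omega
  rw [← Function.Injective.hasSum_iff hi h0]
  have he : ((fun n : ℕ => if k + 1 ≤ n then tt (l + 1) n else 0) ∘ fun j => j + (k + 1))
      = fun j => tt (l + 1) (j + (k + 1)) := by
    funext j
    show (if k + 1 ≤ j + (k + 1) then tt (l + 1) (j + (k + 1)) else 0) = _
    exact if_pos (by omega)
  rw [he]
  exact hasSum_tt_shifted l k

lemma hasSum_tt (l : ℕ) : HasSum (fun n : ℕ => tt (l + 1) n) (tt l 1) := by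
  have h := hasSum_tt_tail l 0
  have he : (fun n : ℕ => if 0 + 1 ≤ n then tt (l + 1) n else 0) = fun n => tt (l + 1) n := by
    funext n
    rcases n with _ | m
    · simp [tt_zero]
    · exact if_pos (by omega)
  rwa [he] at h

lemma gHH_zero (p : ℤ) (q : ℕ) : gHH p q 0 = 0 := by
  cases q <;> simp [gHH]

lemma gHH_nonneg (q n : ℕ) : 0 ≤ gHH 1 q n := by
  induction q generalizing n with
  | zero =>
    rcases n with _ | m
    · simp [gHH]
    · simp only [gHH]
      rw [if_neg (by omega)]
      positivity
  | succ q ih => exact Finset.sum_nonneg fun k _ => ih k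

lemma gH_succ (p : ℤ) (l : ℕ) : gH p (l + 1) = gH p l + (((l : ℝ) + 1) ^ p)⁻¹ := by
  unfold gH
  rw [Finset.sum_Icc_succ_top (by omega : 1 ≤ l + 1)]
  push_cast
  ring_nf

lemma tt_one (l : ℕ) : tt l 1 = ((l : ℝ) + 1)⁻¹ := by
  unfold tt
  have hc : (1 + l).choose l = l + 1 := by
    rw [Nat.add_comm]
    exact Nat.choose_succ_self_right l
  rw [hc]
  push_cast
  simp

lemma tt_base_diff (l m : ℕ) :
    ((m : ℝ) + 1)⁻¹ * tt l (m + 1) - ((l : ℝ) + 1)⁻¹ * tt (l + 1) (m + 1)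
      = ((m : ℝ) + 1)⁻¹ * tt (l + 1) (m + 1) := by
  rw [tt_fact l m, tt_fact (l + 1) m]
  have h2 : m + 1 + (l + 1) = (m + 1 + l) + 1 := by omega
  rw [h2, fac_succ (m + 1 + l), fac_succ l]
  have f1 := fac_ne (m + 1 + l)
  have f2 := fac_ne l
  have f3 := fac_ne m
  have f4 : ((m : ℝ) + 1) ≠ 0 := by positivity
  have f5 : ((l : ℝ) + 1) ≠ 0 := by positivity
  have f6 : ((m : ℝ) + 1 + l + 1) ≠ 0 := by positivity
  push_cast
  field_simp
  ring

lemma base_hasSum (l : ℕ) :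
    HasSum (fun n : ℕ => gHH 1 0 n * tt l n) (Real.pi ^ 2 / 6 - gH 2 l) := by
  induction l with
  | zero =>
    have he : (fun n : ℕ => gHH 1 0 n * tt 0 n) = fun n : ℕ => (1 : ℝ) / (n : ℝ) ^ 2 := by
      funext n
      rcases n with _ | m
      · simp [gHH, tt_zero]
      · simp only [gHH]
        rw [if_neg (by omega)]
        unfold tt
        rw [Nat.choose_zero_right]
        push_cast
        rw [zpow_one]
        field_simp
    rw [he]
    simpa [gH] using hasSum_zeta_two
  | succ l ih =>
    have hd : HasSum (fun n : ℕ => ((l : ℝ) + 1)⁻¹ * tt (l + 1) n) (((l : ℝ) + 1)⁻¹ * tt l 1) :=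
      (hasSum_tt l).mul_left _
    have he : (fun n : ℕ => gHH 1 0 n * tt l n - ((l : ℝ) + 1)⁻¹ * tt (l + 1) n)
        = fun n : ℕ => gHH 1 0 n * tt (l + 1) n := by
      funext n
      rcases n with _ | m
      · simp [gHH, tt_zero]
      · simp only [gHH]
        rw [if_neg (by omega)]
        rw [zpow_one]
        push_cast
        exact tt_base_diff l m
    have hfin := (ih.sub hd)
    rw [he] at hfin
    convert hfin using 1
    · rfl
    rw [gH_succ, tt_one]
    have h2 : (((l : ℝ) + 1) ^ (2 : ℤ))⁻¹ = ((l : ℝ) + 1)⁻¹ * ((l : ℝ) + 1)⁻¹ := by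
      rw [zpow_two, mul_inv]
    rw [h2]
    ring

lemma gHH_succ_eq (q n : ℕ) : gHH 1 (q + 1) n = ∑ k ∈ Finset.Icc 1 n, gHH 1 q k := rfl

lemma main_hasSum : ∀ q l : ℕ, q ≤ l →
    HasSum (fun n : ℕ => gHH 1 q n * tt l n) (Real.pi ^ 2 / 6 - gH 2 (l - q)) := by
  intro q
  induction q with
  | zero => intro l _; simpa using base_hasSum l
  | succ q ih =>
    intro l hl
    obtain ⟨l₀, rfl⟩ : ∃ l₀, l = l₀ + 1 := ⟨l - 1, by omega⟩
    have hql : q ≤ l₀ := by omega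
    set F : ℕ × ℕ → ℝ :=
      fun p => if 1 ≤ p.2 ∧ p.2 ≤ p.1 then gHH 1 q p.2 * tt (l₀ + 1) p.1 else 0 with hF
    have hFnn : ∀ p, 0 ≤ F p := by
      intro p
      dsimp only [F]
      split
      · exact mul_nonneg (gHH_nonneg q _) (tt_nonneg _ _)
      · exact le_refl 0
    have hrow : ∀ n : ℕ, HasSum (fun k => F (n, k)) (gHH 1 (q + 1) n * tt (l₀ + 1) n) := by
      intro n
      have hs : ∀ k ∉ Finset.Icc 1 n, F (n, k) = 0 := by
        intro k hk
        rw [Finset.mem_Icc] at hk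
        exact if_neg (by omega)
      have h : HasSum (fun k => F (n, k)) (∑ k ∈ Finset.Icc 1 n, F (n, k)) :=
        hasSum_sum_of_ne_finset_zero hs
      have hv : ∑ k ∈ Finset.Icc 1 n, F (n, k) = gHH 1 (q + 1) n * tt (l₀ + 1) n := by
        have hc : ∀ k ∈ Finset.Icc 1 n, F (n, k) = gHH 1 q k * tt (l₀ + 1) n := by
          intro k hk
          rw [Finset.mem_Icc] at hk
          exact if_pos ⟨hk.1, hk.2⟩
        rw [Finset.sum_congr rfl hc, ← Finset.sum_mul, gHH_succ_eq]
      rwa [hv] at h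
    have hcol : ∀ k : ℕ, HasSum (fun n => F (n, k)) (gHH 1 q k * tt l₀ k) := by
      intro k
      rcases k with _ | k'
      · have : (fun n : ℕ => F (n, 0)) = fun _ => (0 : ℝ) := by
          funext n; exact if_neg (by omega)
        rw [this, gHH_zero, zero_mul]
        exact hasSum_zero
      · rcases l₀ with _ | l₁
        · -- l₀ = 0 : tt 1 tail sums to tt 0 (k'+1)
          have h := (hasSum_tt_tail 0 k').mul_left (gHH 1 q (k' + 1))
          have he : (fun n : ℕ => gHH 1 q (k' + 1) * (if k' + 1 ≤ n then tt 1 n else 0))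
              = fun n => F (n, k' + 1) := by
            funext n
            dsimp only [F]
            by_cases hn : k' + 1 ≤ n
            · rw [if_pos hn, if_pos ⟨by omega, hn⟩]
            · rw [if_neg hn, if_neg (by omega), mul_zero]
          rwa [he] at h
        · have h := (hasSum_tt_tail (l₁ + 1) k').mul_left (gHH 1 q (k' + 1))
          have he : (fun n : ℕ => gHH 1 q (k' + 1) * (if k' + 1 ≤ n then tt (l₁ + 1 + 1) n else 0))
              = fun n => F (n, k' + 1) := by
            funext n
            dsimp only [F]
            by_cases hn : k' + 1 ≤ n
            · rw [if_pos hn, if_pos ⟨by omega, hn⟩]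
            · rw [if_neg hn, if_neg (by omega), mul_zero]
          rwa [he] at h
    have hw := ih l₀ hql
    have hF' : Summable (fun p : ℕ × ℕ => F (p.2, p.1)) := by
      rw [summable_prod_of_nonneg (fun p => hFnn _)]
      exact ⟨fun k => (hcol k).summable,
        hw.summable.congr fun k => ((hcol k).tsum_eq).symm⟩
    have hFsum : Summable F := by
      have : (fun p : ℕ × ℕ => F (p.2, p.1)) = F ∘ ⇑(Equiv.prodComm ℕ ℕ) := rfl
      rw [this] at hF'
      exact (Equiv.prodComm ℕ ℕ).summable_iff.mp hF'
    have hFS : HasSum F (∑' p, F p) := hFsum.hasSum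
    have hswap : HasSum (fun p : ℕ × ℕ => F (p.2, p.1)) (∑' p, F p) := by
      have : (fun p : ℕ × ℕ => F (p.2, p.1)) = F ∘ ⇑(Equiv.prodComm ℕ ℕ) := rfl
      rw [this]
      exact (Equiv.prodComm ℕ ℕ).hasSum_iff.mpr hFS
    have h1 : HasSum (fun k => gHH 1 q k * tt l₀ k) (∑' p, F p) :=
      hswap.prod_fiberwise fun k => hcol k
    have hSval : (∑' p, F p) = Real.pi ^ 2 / 6 - gH 2 (l₀ - q) := h1.unique hw
    have h2 : HasSum (fun n => gHH 1 (q + 1) n * tt (l₀ + 1) n) (∑' p, F p) :=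
      hFS.prod_fiberwise hrow
    rw [hSval] at h2
    have : l₀ + 1 - (q + 1) = l₀ - q := by omega
    rwa [this]


end Aux

/-- `∑_{n≥1} h_n^{(q)}/(n C(n+l,l)) = π²/6 - H_{l-q}^{(2)}` for `l ≥ q`. -/
theorem stmt_9 (q l : ℕ) (hlq : q ≤ l) :
    ∑' n : ℕ+, gHH 1 q n / ((n : ℝ) * ((((n : ℕ) + l).choose l : ℕ) : ℝ))
      = Real.pi ^ 2 / 6 - gH 2 (l - q) := by
  have h := main_hasSum q l hlq
  have hinj : Function.Injective ((↑·) : ℕ+ → ℕ) := fun a b hab => PNat.coe_injective hab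
  have h0 : ∀ x ∉ Set.range ((↑·) : ℕ+ → ℕ), gHH 1 q x * tt l x = 0 := by
    intro x hx
    have hx0 : x = 0 := by
      by_contra h'
      exact hx ⟨⟨x, Nat.pos_of_ne_zero h'⟩, rfl⟩
    rw [hx0, gHH_zero, zero_mul]
  have h2 : HasSum (fun n : ℕ+ => gHH 1 q (n : ℕ) * tt l (n : ℕ))
      (Real.pi ^ 2 / 6 - gH 2 (l - q)) :=
    (Function.Injective.hasSum_iff hinj h0).mpr h
  have he : (fun n : ℕ+ => gHH 1 q (n : ℕ) / ((n : ℝ) * ((((n : ℕ) + l).choose l : ℕ) : ℝ)))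
      = fun n : ℕ+ => gHH 1 q (n : ℕ) * tt l (n : ℕ) := by
    funext n
    unfold tt
    rw [mul_one_div]
  rw [he]
  exact h2.tsum_eq
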